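/- If G_t denotes the complete t-partite graph K_{2,2,…,2} with all parts of size 2, then lcc(G_t) > (1/2)·log₂ t − 1. -/

import Mathlib

open SimpleGraph Finset

def IsCliqueCover {V : Type*} [DecidableEq V] (G : SimpleGraph V)
    (C : Finset (Finset V)) : Prop :=
  (∀ s ∈ C, G.IsClique (s : Set V)) ∧ ∀ u v : V, G.Adj u v → ∃ s ∈ C, u ∈ s ∧ v ∈ s

noncomputable def lcc {V : Type*} [DecidableEq V] (G : SimpleGraph V) : ℕ :=
  sInf {k | ∃ C : Finset (Finset V), IsCliqueCover G C ∧
    ∀ x : V, (C.filter (fun s => x ∈ s)).card ≤ k}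

def cocktailGraph (t : ℕ) : SimpleGraph (Fin t × Fin 2) where
  Adj u v := u.1 ≠ v.1
  symm := ⟨fun _ _ h => h.symm⟩
  loopless := ⟨fun _ h => h rfl⟩

lemma setpair {α : Type*} [Fintype α] [DecidableEq α] {ι : Type*} [Fintype ι]
    (k : ℕ) (S T : ι → Finset α)
    (hd : ∀ p, Disjoint (S p) (T p))
    (hc : ∀ p q : ι, p ≠ q → ((S p) ∩ (T q)).Nonempty)
    (hs : ∀ p, (S p).card ≤ k) (htt : ∀ p, (T p).card ≤ k) :
    Fintype.card ι ≤ 4 ^ k := by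
  classical
  set n := Fintype.card α with hn
  set F : ι → Finset (α → Bool) := fun p =>
    Finset.univ.filter (fun f => (∀ x ∈ S p, f x = false) ∧ (∀ x ∈ T p, f x = true)) with hF
  have hdisj : ∀ p q : ι, p ≠ q → Disjoint (F p) (F q) := by
    intro p q hpq
    rw [Finset.disjoint_left]
    intro f hfp hfq
    simp only [hF, Finset.mem_filter] at hfp hfq
    obtain ⟨x, hx⟩ := hc p q hpq
    rw [Finset.mem_inter] at hx
    have h1 := hfp.2.1 x hx.1
    have h2 := hfq.2.2 x hx.2
    rw [h1] at h2; exact Bool.false_ne_true h2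
  have hlow : ∀ p, 2 ^ n ≤ (F p).card * 4 ^ k := by
    intro p
    set A := S p ∪ T p with hA
    have hAcard : A.card ≤ 2 * k := by
      calc A.card ≤ (S p).card + (T p).card := Finset.card_union_le _ _
        _ ≤ k + k := add_le_add (hs p) (htt p)
        _ = 2 * k := by ring
    have hAn : A.card ≤ n := Finset.card_le_univ A
    -- injection from ({x // x ∉ A} → Bool) into F p
    set Ψ : ({x : α // x ∉ A} → Bool) → (α → Bool) := fun g x =>
      if h : x ∈ A then decide (x ∈ T p) else g ⟨x, h⟩ with hΨ
    have hmem : ∀ g, Ψ g ∈ F p := by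
      intro g
      simp only [hF, Finset.mem_filter, Finset.mem_univ, true_and]
      constructor
      · intro x hx
        have hxA : x ∈ A := Finset.mem_union_left _ hx
        have hxT : x ∉ T p := Finset.disjoint_left.mp (hd p) hx
        simp [hΨ, hxA, hxT]
      · intro x hx
        have hxA : x ∈ A := Finset.mem_union_right _ hx
        simp [hΨ, hxA, hx]
    have hinj : Function.Injective Ψ := by
      intro g g' h
      funext x
      have := congrFun h x.1
      simpa [hΨ, x.2] using this
    have hcard1 : 2 ^ (n - A.card) ≤ (F p).card := by
      have h1 : (Finset.univ.image Ψ).card ≤ (F p).card := by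
        apply Finset.card_le_card
        intro f hf
        simp only [Finset.mem_image] at hf
        obtain ⟨g, _, rfl⟩ := hf
        exact hmem g
      have h2 : (Finset.univ.image Ψ).card = Fintype.card ({x : α // x ∉ A} → Bool) := by
        rw [Finset.card_image_of_injective _ hinj, Finset.card_univ]
      have h3 : Fintype.card ({x : α // x ∉ A} → Bool) = 2 ^ (n - A.card) := by
        rw [Fintype.card_fun, Fintype.card_bool]
        congr 1
        rw [Fintype.card_subtype_compl]
        congr 1
        exact Fintype.card_coe A
      omega
    calc 2 ^ n ≤ 2 ^ (n - A.card) * 4 ^ k := by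
          have : (4 : ℕ) ^ k = 2 ^ (2 * k) := by rw [pow_mul]; norm_num
          rw [this, ← pow_add]
          exact Nat.pow_le_pow_right (by norm_num) (by omega)
      _ ≤ (F p).card * 4 ^ k := Nat.mul_le_mul_right _ hcard1
  have hsum : (∑ p : ι, (F p).card) ≤ 2 ^ n := by
    rw [← Finset.card_biUnion (fun p _ q _ hpq => hdisj p q hpq)]
    calc (Finset.univ.biUnion F).card ≤ (Finset.univ : Finset (α → Bool)).card :=
          Finset.card_le_card (Finset.subset_univ _)
      _ = 2 ^ n := by rw [Finset.card_univ, Fintype.card_fun, Fintype.card_bool]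
  have key : Fintype.card ι * 2 ^ n ≤ 2 ^ n * 4 ^ k := by
    calc Fintype.card ι * 2 ^ n = ∑ _p : ι, 2 ^ n := by
          rw [Finset.sum_const, Finset.card_univ, smul_eq_mul]
      _ ≤ ∑ p : ι, (F p).card * 4 ^ k := Finset.sum_le_sum fun p _ => hlow p
      _ = (∑ p : ι, (F p).card) * 4 ^ k := by rw [Finset.sum_mul]
      _ ≤ 2 ^ n * 4 ^ k := Nat.mul_le_mul_right _ hsum
  have h2n : 0 < 2 ^ n := Nat.pow_pos (by norm_num)
  calc Fintype.card ι = Fintype.card ι * 2 ^ n / 2 ^ n := by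
        rw [Nat.mul_div_cancel _ h2n]
    _ ≤ 2 ^ n * 4 ^ k / 2 ^ n := Nat.div_le_div_right key
    _ = 4 ^ k := by rw [Nat.mul_div_cancel_left _ h2n]


lemma cover_bound (t k : ℕ) (C : Finset (Finset (Fin t × Fin 2)))
    (hC : IsCliqueCover (cocktailGraph t) C)
    (hk : ∀ x, (C.filter (fun s => x ∈ s)).card ≤ k) :
    t ≤ 4 ^ k := by
  classical
  set S : Fin t → Finset (Finset (Fin t × Fin 2)) :=
    fun p => C.filter (fun s => (p, 0) ∈ s) with hS
  set T : Fin t → Finset (Finset (Fin t × Fin 2)) :=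
    fun p => C.filter (fun s => (p, 1) ∈ s) with hT
  have hd : ∀ p, Disjoint (S p) (T p) := by
    intro p
    rw [Finset.disjoint_left]
    intro s hs1 hs2
    simp only [hS, hT, Finset.mem_filter] at hs1 hs2
    have hclique := hC.1 s hs1.1
    have hne : ((p, 0) : Fin t × Fin 2) ≠ (p, 1) := by simp
    have := hclique hs1.2 hs2.2 hne
    exact this rfl
  have hc : ∀ p q : Fin t, p ≠ q → ((S p) ∩ (T q)).Nonempty := by
    intro p q hpq
    have hadj : (cocktailGraph t).Adj (p, 0) (q, 1) := hpq
    obtain ⟨s, hsC, hu, hv⟩ := hC.2 _ _ hadj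
    exact ⟨s, by simp [hS, hT, Finset.mem_inter, Finset.mem_filter, hsC, hu, hv]⟩
  have := setpair k S T hd hc (fun p => hk _) (fun p => hk _)
  simpa using this

lemma lcc_mem {V : Type*} [DecidableEq V] [Fintype V] (G : SimpleGraph V) :
    ∃ C : Finset (Finset V), IsCliqueCover G C ∧
      ∀ x : V, (C.filter (fun s => x ∈ s)).card ≤ lcc G := by
  classical
  have hne : {k | ∃ C : Finset (Finset V), IsCliqueCover G C ∧
      ∀ x : V, (C.filter (fun s => x ∈ s)).card ≤ k}.Nonempty := by
    set C : Finset (Finset V) := Finset.univ.filter (fun s => G.IsClique (s : Set V)) with hCdef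
    refine ⟨C.card, C, ⟨?_, ?_⟩, ?_⟩
    · intro s hs
      simp only [hCdef, Finset.mem_filter] at hs
      exact hs.2
    · intro u v huv
      refine ⟨{u, v}, ?_, by simp, by simp⟩
      simp only [hCdef, Finset.mem_filter, Finset.mem_univ, true_and]
      rw [Finset.coe_insert, Finset.coe_singleton]
      exact SimpleGraph.isClique_pair.mpr (fun _ => huv)
    · intro x
      exact Finset.card_le_card (Finset.filter_subset _ _)
  exact Nat.sInf_mem hne

theorem stmt12 (t : ℕ) (ht : 1 ≤ t) :
    (1 / 2 : ℝ) * Real.logb 2 (t : ℝ) - 1 < (lcc (cocktailGraph t) : ℝ) := by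
  classical
  obtain ⟨C, hC, hk⟩ := lcc_mem (cocktailGraph t)
  set k := lcc (cocktailGraph t) with hkdef
  have hbound : t ≤ 4 ^ k := cover_bound t k C hC hk
  have h1 : Real.logb 2 (t : ℝ) ≤ 2 * k := by
    have h4 : ((4 : ℝ)) ^ k = 2 ^ (2 * k) := by
      rw [pow_mul]; norm_num
    calc Real.logb 2 (t : ℝ) ≤ Real.logb 2 ((4 : ℝ) ^ k) := by
          apply Real.logb_le_logb_of_le (by norm_num : (1:ℝ) < 2)
          · exact_mod_cast ht
          · exact_mod_cast hbound
      _ = 2 * k := by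
          rw [h4, Real.logb_pow, Real.logb_self_eq_one (by norm_num : (1:ℝ) < 2)]
          push_cast; ring
  nlinarith [h1]
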